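/- arXiv:1301.5296 — 2 statements merged into one kernel-verified Lean document; each statement's English description precedes it below -/
import Mathlib

section
/- Let G be a finite simple graph and f a demand function for G. The following statements are equivalent: (a) G has an f-coloring; (b) there exists a common denominator N for f such that G has an (f, N)-coloring; (c) for every weight function w : V(G) → ℝ, the graph G contains an independent set X such that w(X) ≥ w_f; (d) for every nonnegative weight function w : V(G) → ℝ, the graph G contains an independent set X such that w(X) ≥ w_f. -/
/-- `N` is a common denominator for the demand function `f`. -/
def IsCommonDenom {V : Type} (f : V → ℚ) (N : ℕ) : Prop :=
  0 < N ∧ ∀ v, ∃ k : ℤ, (N : ℚ) * f v = (k : ℚ)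

/-- `ψ` is an `(f, N)`-coloring of `G`: each vertex gets a subset of `{1, …, N}` of size at
least `N·f(v)`, with adjacent vertices receiving disjoint sets. -/
def IsFNColoring {V : Type} (G : SimpleGraph V) (f : V → ℚ) (N : ℕ)
    (ψ : V → Finset ℕ) : Prop :=
  (∀ v, ψ v ⊆ Finset.Icc 1 N) ∧
  (∀ v, (N : ℚ) * f v ≤ ((ψ v).card : ℚ)) ∧
  ∀ u v, G.Adj u v → Disjoint (ψ u) (ψ v)

/-- `G` has an `(f, N)`-coloring. -/
def HasFNColoring {V : Type} (G : SimpleGraph V) (f : V → ℚ) (N : ℕ) : Prop :=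
  ∃ ψ : V → Finset ℕ, IsFNColoring G f N ψ

/-- `G` has an `f`-coloring: an assignment of measurable subsets of `[0,1]` of measure at
least `f(v)` to the vertices, with adjacent vertices receiving disjoint sets. -/
def HasFColoring {V : Type} (G : SimpleGraph V) (f : V → ℚ) : Prop :=
  ∃ φ : V → Set ℝ,
    (∀ v, MeasurableSet (φ v)) ∧
    (∀ v, φ v ⊆ Set.Icc 0 1) ∧
    (∀ v, (f v : ℝ) ≤ (MeasureTheory.volume (φ v)).toReal) ∧
    ∀ u v, G.Adj u v → φ u ∩ φ v = ∅

open Finset MeasureTheory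

theorem farkasQ : ∀ (n : ℕ) (ι : Type) [Fintype ι] (A : ι → Fin n → ℚ) (b : ι → ℚ),
    (∃ x : Fin n → ℚ, ∀ i, ∑ j, A i j * x j ≤ b i) ∨
    (∃ y : ι → ℚ, (∀ i, 0 ≤ y i) ∧ (∀ j, ∑ i, y i * A i j = 0) ∧ ∑ i, y i * b i < 0) := by
  intro n
  induction n with
  | zero =>
    intro ι _ A b
    by_cases h : ∀ i, 0 ≤ b i
    · exact Or.inl ⟨0, fun i => by simpa using h i⟩
    · push_neg at h
      obtain ⟨i0, hi0⟩ := h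
      classical
      refine Or.inr ⟨fun i => if i = i0 then 1 else 0, fun i => by positivity, fun j => j.elim0, ?_⟩
      simp only [ite_mul, one_mul, zero_mul, Finset.sum_ite_eq', mem_univ, if_pos]
      exact hi0
  | succ n ih =>
    intro ι _ A b
    classical
    set a : ι → ℚ := fun i => A i (Fin.last n) with ha
    set r : ι → Fin n → ℚ := fun i j => A i j.castSucc with hr
    let P : Type := {p : ι × ι // 0 < a p.1 ∧ a p.2 < 0}
    let Z : Type := {i : ι // a i = 0}
    let comb : (ι → ℚ) → (P ⊕ Z) → ℚ := fun c i' =>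
      match i' with
      | Sum.inl p => (-a p.1.2) * c p.1.1 + (a p.1.1) * c p.1.2
      | Sum.inr i => c i.1
    let A' : (P ⊕ Z) → Fin n → ℚ := fun i' j => comb (fun i => r i j) i'
    let b' : (P ⊕ Z) → ℚ := fun i' => comb b i'
    rcases ih (P ⊕ Z) A' b' with ⟨x', hx'⟩ | ⟨y', hy0, hyA, hyb⟩
    · -- build solution: choose last coordinate
      left
      set S : ι → ℚ := fun i => ∑ j, r i j * x' j with hS
      set U : ι → ℚ := fun i => (b i - S i) / a i with hU
      have eU : ∀ i, a i ≠ 0 → a i * U i = b i - S i := by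
        intro i hi
        rw [hU]
        exact mul_div_cancel₀ _ hi
      have key : ∀ i k, 0 < a i → a k < 0 → U k ≤ U i := by
        intro i k hi hk
        have h := hx' (Sum.inl ⟨⟨i,k⟩, hi, hk⟩)
        simp only [A', b', comb] at h
        have hsum : ∑ j, ((-a k) * r i j + a i * r k j) * x' j
            = (-a k) * S i + a i * S k := by
          rw [hS]; rw [mul_sum, mul_sum, ← sum_add_distrib]
          congr 1; ext j; ring
        rw [hsum] at h
        have hX : 0 ≤ (-a k) * (b i - S i) + a i * (b k - S k) := by linarith
        have hexp : (-a k) * (b i - S i) + a i * (b k - S k)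
            = (a i * a k) * (U k - U i) := by
          rw [← eU i (ne_of_gt hi), ← eU k (ne_of_lt hk)]; ring
        rw [hexp] at hX
        nlinarith [mul_neg_of_pos_of_neg hi hk]
      let Pos : Finset ι := univ.filter (fun i => 0 < a i)
      let Neg : Finset ι := univ.filter (fun i => a i < 0)
      set t : ℚ := if hP : Pos.Nonempty then Pos.inf' hP U
        else if hN : Neg.Nonempty then Neg.sup' hN U else 0 with htdef
      have htle : ∀ i, 0 < a i → t ≤ U i := by
        intro i hi
        have hmem : i ∈ Pos := by simp [Pos, hi]
        have hP : Pos.Nonempty := ⟨i, hmem⟩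
        rw [htdef, dif_pos hP]; exact inf'_le _ hmem
      have hget : ∀ k, a k < 0 → U k ≤ t := by
        intro k hk
        have hmem : k ∈ Neg := by simp [Neg, hk]
        by_cases hP : Pos.Nonempty
        · rw [htdef, dif_pos hP]
          apply le_inf'
          intro i hi
          exact key i k (mem_filter.1 hi).2 hk
        · have hN : Neg.Nonempty := ⟨k, hmem⟩
          rw [htdef, dif_neg hP, dif_pos hN]
          exact le_sup' _ hmem
      set xfull : Fin (n+1) → ℚ := Fin.snoc x' t with hxfull
      refine ⟨xfull, fun i => ?_⟩
      have hsplit : ∑ j : Fin (n+1), A i j * xfull j = S i + a i * t := by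
        rw [hxfull]
        rw [Fin.sum_univ_castSucc]
        simp only [Fin.snoc_castSucc, Fin.snoc_last, hS, hr, ha]
      rw [hsplit]
      rcases lt_trichotomy (a i) 0 with hneg | hzero | hpos
      · have h1 := hget i hneg
        have h2 : a i * U i = b i - S i := eU i (ne_of_lt hneg)
        nlinarith
      · have h := hx' (Sum.inr ⟨i, hzero⟩)
        simp only [A', b', comb] at h
        rw [hzero]
        have : S i = ∑ j, r i j * x' j := hS ▸ rfl
        linarith [h, this ▸ (le_refl (S i))]
      · have h1 := htle i hpos
        have h2 : a i * U i = b i - S i := eU i (ne_of_gt hpos)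
        nlinarith
    · -- build certificate
      right
      let coeff : (P ⊕ Z) → ι → ℚ := fun i' i =>
        match i' with
        | Sum.inl p => (if p.1.1 = i then -a p.1.2 else 0) + (if p.1.2 = i then a p.1.1 else 0)
        | Sum.inr k => if k.1 = i then 1 else 0
      have hcoeffnn : ∀ i' i, 0 ≤ coeff i' i := by
        rintro (⟨⟨p,q⟩,hpq⟩|⟨k,hk⟩) i
        · have h1 := hpq.1
          have h2 := hpq.2
          dsimp only [coeff]
          apply add_nonneg <;> (split_ifs <;> linarith)
        · dsimp only [coeff]; split <;> norm_num
      have hcomb : ∀ (c : ι → ℚ) i', ∑ i, coeff i' i * c i = comb c i' := by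
        rintro c (⟨⟨p,q⟩,hpq⟩|⟨k,hk⟩)
        · simp only [coeff, comb, add_mul]
          rw [sum_add_distrib]
          congr 1
          · rw [Finset.sum_eq_single p]
            · simp
            · intro i _ hip; simp [Ne.symm hip]
            · simp
          · rw [Finset.sum_eq_single q]
            · simp
            · intro i _ hiq; simp [Ne.symm hiq]
            · simp
        · simp only [coeff, comb]
          rw [Finset.sum_eq_single k]
          · simp
          · intro i _ hik; simp [Ne.symm hik]
          · simp
      let y : ι → ℚ := fun i => ∑ i', y' i' * coeff i' i
      have hswap : ∀ (c : ι → ℚ), ∑ i, y i * c i = ∑ i', y' i' * comb c i' := by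
        intro c
        simp only [y, sum_mul]
        rw [Finset.sum_comm]
        refine Finset.sum_congr rfl fun i' _ => ?_
        rw [← hcomb c i', mul_sum]
        refine Finset.sum_congr rfl fun i _ => ?_
        ring
      refine ⟨y, fun i => Finset.sum_nonneg fun i' _ => mul_nonneg (hy0 i') (hcoeffnn i' i), ?_, ?_⟩
      · intro j
        rcases Fin.eq_castSucc_or_eq_last j with ⟨j0, rfl⟩ | rfl
        · show ∑ i, y i * A i j0.castSucc = 0
          have : ∀ i, A i j0.castSucc = r i j0 := fun i => by rw [hr]
          calc ∑ i, y i * A i j0.castSucc = ∑ i, y i * r i j0 := by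
                refine Finset.sum_congr rfl fun i _ => by rw [this i]
            _ = 0 := by rw [hswap (fun i => r i j0)]; exact hyA j0
        · show ∑ i, y i * A i (Fin.last n) = 0
          have : ∀ i, A i (Fin.last n) = a i := fun i => by rw [ha]
          calc ∑ i, y i * A i (Fin.last n) = ∑ i, y i * a i := by
                refine Finset.sum_congr rfl fun i _ => by rw [this i]
            _ = ∑ i', y' i' * comb a i' := hswap a
            _ = 0 := by
                apply Finset.sum_eq_zero
                rintro (⟨⟨p,q⟩,hpq⟩|⟨k,hk⟩) _
                · simp only [comb]; ring
                · simp [comb, hk]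
      · rw [hswap b]; exact hyb

lemma exists_rational_cover {V : Type} [Fintype V] [DecidableEq V] (G : SimpleGraph V) (f : V → ℚ)
    (hd : ∀ w : V → ℝ, (∀ v, 0 ≤ w v) → ∃ X : Finset V, (∀ u ∈ X, ∀ v ∈ X, ¬ G.Adj u v) ∧
        (∑ v, (f v : ℝ) * w v) ≤ ∑ v ∈ X, w v) :
    ∃ lam : Finset V → ℚ, (∀ X, 0 ≤ lam X) ∧
      (∀ X, lam X ≠ 0 → ∀ u ∈ X, ∀ v ∈ X, ¬ G.Adj u v) ∧
      (∑ X : Finset V, lam X ≤ 1) ∧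
      (∀ v, f v ≤ ∑ X ∈ Finset.univ.filter (fun X : Finset V => v ∈ X), lam X) := by
  classical
  set n := Fintype.card (Finset V) with hn
  set e : Fin n ≃ Finset V := (Fintype.equivFin (Finset V)).symm with he
  set Indep : Finset V → Prop := fun X => ∀ u ∈ X, ∀ v ∈ X, ¬ G.Adj u v with hIndep
  let κ : Type := Unit ⊕ V ⊕ (Finset V) ⊕ (Finset V)
  let A : κ → Fin n → ℚ := fun i j =>
    match i with
    | Sum.inl _ => 1
    | Sum.inr (Sum.inl v) => if v ∈ e j then -1 else 0
    | Sum.inr (Sum.inr (Sum.inl X)) => if e j = X then -1 else 0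
    | Sum.inr (Sum.inr (Sum.inr X)) => if e j = X ∧ ¬ Indep X then 1 else 0
  let b : κ → ℚ := fun i =>
    match i with
    | Sum.inl _ => 1
    | Sum.inr (Sum.inl v) => -f v
    | Sum.inr (Sum.inr _) => 0
  rcases farkasQ n κ A b with ⟨x, hx⟩ | ⟨y, hy0, hyA, hyb⟩
  · -- feasible: extract lam
    set lam : Finset V → ℚ := fun X => x (e.symm X) with hlam
    have hxj : ∀ j, x j = lam (e j) := by
      intro j; simp [hlam]
    have hnn : ∀ X, 0 ≤ lam X := by
      intro X
      have h := hx (Sum.inr (Sum.inr (Sum.inl X)))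
      simp only [A, b] at h
      rw [Finset.sum_eq_single (e.symm X)] at h
      · rw [Equiv.apply_symm_apply, if_pos rfl] at h
        rw [hlam]; linarith
      · intro j _ hj
        rw [if_neg, zero_mul]
        intro hej; exact hj (by rw [← hej, Equiv.symm_apply_apply])
      · intro h'; exact absurd (Finset.mem_univ _) h'
    refine ⟨lam, hnn, ?_, ?_, ?_⟩
    · intro X hX
      by_contra hind
      have h := hx (Sum.inr (Sum.inr (Sum.inr X)))
      simp only [A, b] at h
      rw [Finset.sum_eq_single (e.symm X)] at h
      · rw [Equiv.apply_symm_apply] at h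
        rw [if_pos ⟨rfl, fun hI => hind fun u hu v hv => hI u hu v hv⟩, one_mul] at h
        have hlX : lam X = x (e.symm X) := by rw [hlam]
        exact hX (le_antisymm (hlX ▸ h) (hnn X))
      · intro j _ hj
        rw [if_neg, zero_mul]
        rintro ⟨hej, -⟩; exact hj (by rw [← hej, Equiv.symm_apply_apply])
      · intro h'; exact absurd (Finset.mem_univ _) h'
    · have h := hx (Sum.inl ())
      simp only [A, b, one_mul] at h
      calc ∑ X : Finset V, lam X = ∑ j, lam (e j) := (Equiv.sum_comp e _).symm
        _ = ∑ j, x j := Finset.sum_congr rfl fun j _ => (hxj j).symm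
        _ ≤ 1 := h
    · intro v
      have h := hx (Sum.inr (Sum.inl v))
      simp only [A, b] at h
      have hcalc : ∑ j, (if v ∈ e j then (-1:ℚ) else 0) * x j
          = -∑ X ∈ Finset.univ.filter (fun X : Finset V => v ∈ X), lam X := by
        rw [Finset.sum_filter]
        rw [← Equiv.sum_comp e (fun X => if v ∈ X then lam X else 0)]
        rw [← Finset.sum_neg_distrib]
        refine Finset.sum_congr rfl fun j _ => ?_
        rw [hxj j]
        split <;> ring
      rw [hcalc] at h
      linarith
  · -- infeasible: contradiction with hd
    exfalso
    set t : ℚ := y (Sum.inl ()) with ht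
    set u : V → ℚ := fun v => y (Sum.inr (Sum.inl v)) with hu
    have hun : ∀ v, 0 ≤ u v := fun v => hy0 _
    have hrow : ∀ X : Finset V, Indep X → ∑ v ∈ X, u v ≤ t := by
      intro X hX
      have h := hyA (e.symm X)
      rw [Fintype.sum_sum_type, Fintype.sum_sum_type, Fintype.sum_sum_type] at h
      simp only [A, Equiv.apply_symm_apply] at h
      have h1 : ∑ i : Unit, y (Sum.inl i) * 1 = t := by simp [ht]
      have h2 : ∑ w, y (Sum.inr (Sum.inl w)) * (if w ∈ X then (-1:ℚ) else 0)
          = -∑ w ∈ X, u w := by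
        simp only [mul_ite, mul_neg_one, mul_zero]
        rw [← Finset.sum_neg_distrib]
        rw [← Finset.sum_filter]
        congr 1
        simp
      have h3 : ∑ Y : Finset V, y (Sum.inr (Sum.inr (Sum.inl Y))) * (if X = Y then (-1:ℚ) else 0)
          = -y (Sum.inr (Sum.inr (Sum.inl X))) := by
        rw [Finset.sum_eq_single X]
        · rw [if_pos rfl]; ring
        · intro Y _ hY; rw [if_neg (Ne.symm hY), mul_zero]
        · intro h'; exact absurd (Finset.mem_univ _) h'
      have h4 : ∑ Y : Finset V, y (Sum.inr (Sum.inr (Sum.inr Y))) * (if X = Y ∧ ¬ Indep Y then (1:ℚ) else 0)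
          = 0 := by
        apply Finset.sum_eq_zero
        intro Y _
        rw [if_neg, mul_zero]
        rintro ⟨rfl, hI⟩
        exact hI hX
      rw [h1, h2, h3, h4] at h
      have := hy0 (Sum.inr (Sum.inr (Sum.inl X)))
      linarith
    have hfb : t < ∑ v, u v * f v := by
      rw [Fintype.sum_sum_type, Fintype.sum_sum_type, Fintype.sum_sum_type] at hyb
      simp only [b, mul_one, mul_zero, mul_neg, Finset.sum_const_zero, add_zero] at hyb
      have h1 : ∑ i : Unit, y (Sum.inl i) = t := by simp [ht]
      rw [h1] at hyb
      have h2 : ∑ x : V, -(y (Sum.inr (Sum.inl x)) * f x) = -∑ v : V, u v * f v := by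
        rw [← Finset.sum_neg_distrib]
      rw [h2] at hyb
      linarith
    obtain ⟨X, hXind, hXw⟩ := hd (fun v => ((u v : ℚ) : ℝ)) (fun v => by show (0:ℝ) ≤ ((u v : ℚ) : ℝ); exact_mod_cast hun v)
    have hcast : ((∑ v, f v * u v : ℚ) : ℝ) ≤ ((∑ v ∈ X, u v : ℚ) : ℝ) := by
      push_cast
      convert hXw using 2
    rw [Rat.cast_le] at hcast
    have hXle := hrow X (by rw [hIndep]; exact hXind)
    have : ∑ v, u v * f v = ∑ v, f v * u v := Finset.sum_congr rfl fun v _ => mul_comm _ _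
    linarith

lemma ratint (q : ℚ) (m : ℕ) (hd : q.den ∣ m) : ∃ k : ℤ, (m:ℚ) * q = (k:ℚ) := by
  obtain ⟨c, hc⟩ := hd
  refine ⟨c * q.num, ?_⟩
  have h1 : ((q.den : ℚ)) * q = (q.num : ℚ) := by
    rw [mul_comm]; exact_mod_cast Rat.mul_den_eq_num q
  calc ((m:ℕ):ℚ) * q = (c:ℚ) * ((q.den:ℚ) * q) := by rw [hc]; push_cast; ring
    _ = ((c * q.num : ℤ) : ℚ) := by rw [h1]; push_cast; ring

lemma cover_to_coloring {V : Type} [Fintype V] [DecidableEq V] (G : SimpleGraph V) (f : V → ℚ)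
    (hf0 : ∀ v, 0 ≤ f v) (lam : Finset V → ℚ) (h0 : ∀ X, 0 ≤ lam X)
    (hind : ∀ X, lam X ≠ 0 → ∀ u ∈ X, ∀ v ∈ X, ¬ G.Adj u v)
    (htot : ∑ X : Finset V, lam X ≤ 1)
    (hcov : ∀ v, f v ≤ ∑ X ∈ Finset.univ.filter (fun X : Finset V => v ∈ X), lam X) :
    ∃ N : ℕ, IsCommonDenom f N ∧ HasFNColoring G f N := by
  classical
  set n := Fintype.card (Finset V) with hn
  set e : Fin n ≃ Finset V := (Fintype.equivFin (Finset V)).symm with he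
  set N : ℕ := (∏ v, (f v).den) * (∏ X : Finset V, (lam X).den) with hN
  have hNpos : 0 < N := by
    rw [hN]
    apply Nat.mul_pos <;> exact Finset.prod_pos fun _ _ => Rat.den_pos _
  have hNf : ∀ v, ∃ k : ℤ, (N:ℚ) * f v = (k:ℚ) := by
    intro v
    apply ratint
    rw [hN]
    exact dvd_mul_of_dvd_left (Finset.dvd_prod_of_mem _ (Finset.mem_univ v)) _
  have hNlam : ∀ X, ∃ k : ℤ, (N:ℚ) * lam X = (k:ℚ) := by
    intro X
    apply ratint
    rw [hN]
    exact dvd_mul_of_dvd_right (Finset.dvd_prod_of_mem _ (Finset.mem_univ X)) _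
  -- block sizes
  have hs : ∀ j : Fin n, ∃ s : ℕ, (s : ℚ) = (N:ℚ) * lam (e j) := by
    intro j
    obtain ⟨k, hk⟩ := hNlam (e j)
    have hk0 : (0:ℚ) ≤ (k:ℚ) := by
      rw [← hk]; exact mul_nonneg (by positivity) (h0 _)
    have h2 : (k.toNat : ℤ) = k := Int.toNat_of_nonneg (by exact_mod_cast hk0)
    refine ⟨k.toNat, ?_⟩
    rw [hk]
    exact_mod_cast h2
  choose s hsval using hs
  set o : Fin n → ℕ := fun j => ∑ j' ∈ Finset.Iio j, s j' with ho
  have hoe : ∀ j, o j + s j = ∑ j' ∈ Finset.Iic j, s j' := by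
    intro j
    rw [ho, ← Finset.Iio_insert, Finset.sum_insert (by simp)]
    ring
  have hmono : ∀ j j' : Fin n, j < j' → o j + s j ≤ o j' := by
    intro j j' hjj
    rw [hoe, ho]
    apply Finset.sum_le_sum_of_subset
    intro i hi
    simp only [Finset.mem_Iic] at hi
    simp only [Finset.mem_Iio]
    exact lt_of_le_of_lt hi hjj
  have hub : ∀ j, o j + s j ≤ N := by
    intro j
    rw [hoe]
    calc ∑ j' ∈ Finset.Iic j, s j' ≤ ∑ j' : Fin n, s j' :=
          Finset.sum_le_sum_of_subset (Finset.subset_univ _)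
      _ ≤ N := by
          have : ((∑ j' : Fin n, s j' : ℕ) : ℚ) ≤ (N:ℚ) := by
            push_cast
            calc ∑ j' : Fin n, ((s j' : ℚ)) = ∑ j' : Fin n, (N:ℚ) * lam (e j') := by
                  exact Finset.sum_congr rfl fun j' _ => hsval j'
              _ = (N:ℚ) * ∑ j' : Fin n, lam (e j') := by rw [Finset.mul_sum]
              _ = (N:ℚ) * ∑ X : Finset V, lam X := by rw [Equiv.sum_comp e]
              _ ≤ (N:ℚ) * 1 := by
                  apply mul_le_mul_of_nonneg_left htot (by positivity)
              _ = (N:ℚ) := mul_one _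
          exact_mod_cast this
  have hdisj : ∀ j j' : Fin n, j ≠ j' →
      Disjoint (Finset.Ioc (o j) (o j + s j)) (Finset.Ioc (o j') (o j' + s j')):= by
    have key : ∀ j j' : Fin n, j < j' →
        Disjoint (Finset.Ioc (o j) (o j + s j)) (Finset.Ioc (o j') (o j' + s j')) := by
      intro j j' hjj
      rw [Finset.disjoint_left]
      intro x hx hx'
      simp only [Finset.mem_Ioc] at hx hx'
      have := hmono j j' hjj
      omega
    intro j j' hjj
    rcases lt_or_gt_of_ne hjj with h | h
    · exact key j j' h
    · exact (key j' j h).symm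
  set ψ : V → Finset ℕ := fun v =>
    (Finset.univ.filter (fun j : Fin n => v ∈ e j)).biUnion
      (fun j => Finset.Ioc (o j) (o j + s j)) with hψ
  refine ⟨N, ⟨hNpos, hNf⟩, ψ, ?_, ?_, ?_⟩
  · -- subset of Icc 1 N
    intro v x hx
    rw [hψ] at hx
    simp only [Finset.mem_biUnion, Finset.mem_filter, Finset.mem_Ioc] at hx
    obtain ⟨j, ⟨-, -⟩, hx1, hx2⟩ := hx
    rw [Finset.mem_Icc]
    exact ⟨by omega, le_trans hx2 (hub j)⟩
  · -- cardinality
    intro v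
    have hcard : (ψ v).card = ∑ j ∈ Finset.univ.filter (fun j : Fin n => v ∈ e j),
        (Finset.Ioc (o j) (o j + s j)).card := by
      rw [hψ]
      apply Finset.card_biUnion
      intro j _ j' _ hjj
      exact hdisj j j' hjj
    have hcard2 : (ψ v).card = ∑ j ∈ Finset.univ.filter (fun j : Fin n => v ∈ e j), s j := by
      rw [hcard]
      refine Finset.sum_congr rfl fun j _ => ?_
      rw [Nat.card_Ioc]
      omega
    rw [hcard2]
    push_cast
    calc (N:ℚ) * f v ≤ (N:ℚ) * ∑ X ∈ Finset.univ.filter (fun X : Finset V => v ∈ X), lam X :=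
          mul_le_mul_of_nonneg_left (hcov v) (by positivity)
      _ = ∑ X ∈ Finset.univ.filter (fun X : Finset V => v ∈ X), (N:ℚ) * lam X := by
          rw [Finset.mul_sum]
      _ = ∑ j ∈ Finset.univ.filter (fun j : Fin n => v ∈ e j), (N:ℚ) * lam (e j) := by
          rw [Finset.sum_filter, Finset.sum_filter, ← Equiv.sum_comp e
            (fun X => if v ∈ X then (N:ℚ) * lam X else 0)]
      _ = ∑ j ∈ Finset.univ.filter (fun j : Fin n => v ∈ e j), ((s j : ℚ)) :=
          Finset.sum_congr rfl fun j _ => (hsval j).symm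
  · -- disjointness on edges
    intro a c hadj
    rw [Finset.disjoint_left]
    intro x hxa hxc
    rw [hψ] at hxa hxc
    simp only [Finset.mem_biUnion, Finset.mem_filter, Finset.mem_univ, true_and] at hxa hxc
    obtain ⟨j, hj, hxj⟩ := hxa
    obtain ⟨j', hj', hxj'⟩ := hxc
    by_cases hjj : j = j'
    · subst hjj
      have hlam0 : lam (e j) ≠ 0 := by
        intro h0'
        have : (s j : ℚ) = 0 := by rw [hsval, h0', mul_zero]
        have hs0 : s j = 0 := by exact_mod_cast this
        rw [hs0] at hxj
        simp at hxj
      exact hind (e j) hlam0 a hj c hj' hadj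
    · exact Finset.disjoint_left.1 (hdisj j j' hjj) hxj hxj'

lemma trim_set (A : Set ℝ) (hA : MeasurableSet A) (hA1 : A ⊆ Set.Icc 0 1) (c : ℝ)
    (hc0 : 0 ≤ c) (hc : c ≤ (volume A).toReal) :
    ∃ B : Set ℝ, B ⊆ A ∧ MeasurableSet B ∧ volume B = ENNReal.ofReal c := by
  have hfin : volume A ≠ ⊤ := by
    apply ne_top_of_le_ne_top _ (measure_mono hA1)
    simp [Real.volume_Icc]
  set F : ℝ → ℝ := fun t => (volume (A ∩ Set.Icc 0 t)).toReal with hF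
  have hfin' : ∀ t, volume (A ∩ Set.Icc 0 t) ≠ ⊤ :=
    fun t => ne_top_of_le_ne_top hfin (measure_mono Set.inter_subset_left)
  have hmono : ∀ s t : ℝ, s ≤ t → F s ≤ F t := by
    intro s t hst
    apply ENNReal.toReal_mono (hfin' t)
    exact measure_mono (Set.inter_subset_inter_right _ (Set.Icc_subset_Icc_right hst))
  have hlip : ∀ s t : ℝ, s ≤ t → F t ≤ F s + (t - s) := by
    intro s t hst
    have hsub : A ∩ Set.Icc 0 t ⊆ (A ∩ Set.Icc 0 s) ∪ Set.Ioc s t := by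
      rintro z ⟨hzA, hz0, hzt⟩
      by_cases hzs : z ≤ s
      · exact Or.inl ⟨hzA, hz0, hzs⟩
      · exact Or.inr ⟨lt_of_not_ge hzs, hzt⟩
    have h1 : volume (A ∩ Set.Icc 0 t) ≤ volume (A ∩ Set.Icc 0 s) + ENNReal.ofReal (t - s) := by
      calc volume (A ∩ Set.Icc 0 t) ≤ volume ((A ∩ Set.Icc 0 s) ∪ Set.Ioc s t) :=
            measure_mono hsub
        _ ≤ volume (A ∩ Set.Icc 0 s) + volume (Set.Ioc s t) := measure_union_le _ _
        _ = volume (A ∩ Set.Icc 0 s) + ENNReal.ofReal (t - s) := by rw [Real.volume_Ioc]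
    calc F t ≤ ((volume (A ∩ Set.Icc 0 s)) + ENNReal.ofReal (t - s)).toReal :=
          ENNReal.toReal_mono (by simp [hfin' s, ENNReal.add_ne_top]) h1
      _ = F s + (t - s) := by
          rw [ENNReal.toReal_add (hfin' s) (by simp)]
          rw [ENNReal.toReal_ofReal (by linarith)]
  have hcont : Continuous F := by
    apply LipschitzWith.continuous (K := 1)
    apply LipschitzWith.of_dist_le_mul
    intro s t
    simp only [NNReal.coe_one, one_mul, Real.dist_eq]
    rcases le_total s t with h | h
    · rw [abs_sub_comm, abs_of_nonneg (by linarith [hmono s t h]), abs_of_nonpos (by linarith)]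
      have := hlip s t h
      linarith
    · rw [abs_of_nonneg (by linarith [hmono t s h]), abs_of_nonneg (by linarith)]
      have := hlip t s h
      linarith
  have hF0 : F 0 = 0 := by
    have hss : A ∩ Set.Icc 0 0 ⊆ ({0} : Set ℝ) := by
      rintro z ⟨-, hz⟩
      simp only [Set.Icc_self, Set.mem_singleton_iff] at hz ⊢
      exact hz
    have h0 : volume (A ∩ Set.Icc 0 0) = 0 :=
      le_antisymm (le_trans (measure_mono hss) (by simp)) (by simp)
    show (volume (A ∩ Set.Icc 0 0)).toReal = 0
    rw [h0]
    simp
  have hF1 : F 1 = (volume A).toReal := by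
    show (volume (A ∩ Set.Icc 0 1)).toReal = (volume A).toReal
    rw [Set.inter_eq_left.2 hA1]
  have hIVT : ∃ t ∈ Set.Icc (0:ℝ) 1, F t = c := by
    apply intermediate_value_Icc (by norm_num : (0:ℝ) ≤ 1) hcont.continuousOn
    rw [hF0, hF1]
    exact ⟨hc0, hc⟩
  obtain ⟨t, -, htc⟩ := hIVT
  refine ⟨A ∩ Set.Icc 0 t, Set.inter_subset_left, hA.inter measurableSet_Icc, ?_⟩
  rw [← htc, hF, ENNReal.ofReal_toReal (hfin' t)]

lemma fcoloring_to_weights {V : Type} [Fintype V] (G : SimpleGraph V) (f : V → ℚ)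
    (hf0 : ∀ v, 0 ≤ f v) (h : HasFColoring G f) (w : V → ℝ) :
    ∃ X : Finset V, (∀ u ∈ X, ∀ v ∈ X, ¬ G.Adj u v) ∧
      (∑ v, (f v : ℝ) * w v) ≤ ∑ v ∈ X, w v := by
  classical
  obtain ⟨φ, hmeas, hsub, hvol, hdisj⟩ := h
  have htrim : ∀ v, ∃ B : Set ℝ, B ⊆ φ v ∧ MeasurableSet B ∧
      volume B = ENNReal.ofReal ((f v : ℝ)) :=
    fun v => trim_set (φ v) (hmeas v) (hsub v) _ (by exact_mod_cast hf0 v) (hvol v)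
  choose φ' hφsub hφmeas hφvol using htrim
  set IndSets : Finset (Finset V) :=
    Finset.univ.filter (fun X : Finset V => ∀ u ∈ X, ∀ v ∈ X, ¬ G.Adj u v) with hIS
  have hne : IndSets.Nonempty := ⟨∅, by simp [hIS]⟩
  set M : ℝ := IndSets.sup' hne (fun X => ∑ v ∈ X, w v) with hM
  obtain ⟨X0, hX0mem, hX0⟩ := Finset.exists_mem_eq_sup' hne (fun X => ∑ v ∈ X, w v)
  refine ⟨X0, (Finset.mem_filter.1 hX0mem).2, ?_⟩
  rw [← hX0]
  -- the function g
  set g : ℝ → ℝ := fun x => ∑ v, Set.indicator (φ' v) (fun _ => w v) x with hg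
  have hint : ∀ v : V, IntegrableOn (Set.indicator (φ' v) (fun _ => w v)) (Set.Icc 0 1) := by
    intro v
    rw [IntegrableOn, integrable_indicator_iff (hφmeas v)]
    refine integrableOn_const ?_ (by simp)
    apply ne_of_lt
    rw [Measure.restrict_apply (hφmeas v)]
    exact lt_of_le_of_lt (le_trans (measure_mono Set.inter_subset_left)
      (le_of_eq (hφvol v))) (by simp [ENNReal.ofReal_lt_top])
  have hgint : IntegrableOn g (Set.Icc 0 1) := by
    apply MeasureTheory.integrable_finset_sum
    intro v _
    exact hint v
  have hintegral : ∫ x in Set.Icc (0:ℝ) 1, g x = ∑ v, w v * (f v : ℝ) := by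
    rw [hg]
    rw [MeasureTheory.integral_finset_sum _ (fun v _ => hint v)]
    refine Finset.sum_congr rfl fun v _ => ?_
    rw [MeasureTheory.integral_indicator (hφmeas v)]
    rw [MeasureTheory.setIntegral_const]
    rw [measureReal_def]
    rw [Measure.restrict_apply (hφmeas v)]
    have : φ' v ∩ Set.Icc 0 1 = φ' v :=
      Set.inter_eq_left.2 (fun x hx => hsub v (hφsub v hx))
    rw [this, hφvol v, ENNReal.toReal_ofReal (by exact_mod_cast hf0 v)]
    simp [mul_comm]
  have hgle : ∀ x : ℝ, g x ≤ M := by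
    intro x
    have hx : g x = ∑ v ∈ Finset.univ.filter (fun v => x ∈ φ' v), w v := by
      rw [hg, Finset.sum_filter]
      refine Finset.sum_congr rfl fun v _ => ?_
      rw [Set.indicator_apply]
    rw [hx]
    apply Finset.le_sup' (fun X => ∑ v ∈ X, w v)
    rw [hIS, Finset.mem_filter]
    refine ⟨Finset.mem_univ _, fun u hu v hv hadj => ?_⟩
    rw [Finset.mem_filter] at hu hv
    have hu' : x ∈ φ u := hφsub u hu.2
    have hv' : x ∈ φ v := hφsub v hv.2
    have := hdisj u v hadj
    exact absurd (Set.mem_inter hu' hv') (by rw [this]; exact Set.notMem_empty x)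
  have hbound : ∫ x in Set.Icc (0:ℝ) 1, g x ≤ M := by
    have hMint : IntegrableOn (fun _ : ℝ => M) (Set.Icc 0 1) := by
      refine integrableOn_const ?_ (by simp)
      simp [Real.volume_Icc]
    calc ∫ x in Set.Icc (0:ℝ) 1, g x ≤ ∫ _ in Set.Icc (0:ℝ) 1, M :=
          MeasureTheory.setIntegral_mono_on hgint hMint measurableSet_Icc
            (fun x _ => hgle x)
      _ = M := by
          rw [MeasureTheory.setIntegral_const]
          simp [Real.volume_Icc]
  calc ∑ v, (f v : ℝ) * w v = ∑ v, w v * (f v : ℝ) :=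
        Finset.sum_congr rfl fun v _ => mul_comm _ _
    _ = ∫ x in Set.Icc (0:ℝ) 1, g x := hintegral.symm
    _ ≤ M := hbound

lemma fn_to_fcoloring {V : Type} [Fintype V] (G : SimpleGraph V) (f : V → ℚ) (N : ℕ)
    (hN : 0 < N) (h : HasFNColoring G f N) : HasFColoring G f := by
  obtain ⟨ψ, hsub, hcard, hdisj⟩ := h
  have hNR : (0:ℝ) < N := by exact_mod_cast hN
  set B : ℕ → Set ℝ := fun i => Set.Ico (((i:ℝ) - 1)/N) ((i:ℝ)/N) with hB
  have hBdisjoint : ∀ i i' : ℕ, i ≠ i' → Disjoint (B i) (B i') := by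
    have key : ∀ i i' : ℕ, i < i' → Disjoint (B i) (B i') := by
      intro i i' hii
      rw [Set.disjoint_left]
      rintro x ⟨-, h2⟩ ⟨h3, -⟩
      have hle : ((i:ℝ)) ≤ (i':ℝ) - 1 := by
        have : (i:ℝ) + 1 ≤ (i':ℝ) := by exact_mod_cast hii
        linarith
      have h4 : (i:ℝ)/N ≤ ((i':ℝ) - 1)/N := by gcongr
      linarith
    intro i i' hii
    rcases lt_or_gt_of_ne hii with hlt | hgt
    · exact key i i' hlt
    · exact (key i' i hgt).symm
  have hBvol : ∀ i : ℕ, 1 ≤ i → volume (B i) = ENNReal.ofReal (1/N) := by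
    intro i hi
    rw [hB]
    simp only [Real.volume_Ico]
    congr 1
    field_simp
    ring
  set φ : V → Set ℝ := fun v => ⋃ i ∈ ψ v, B i with hφ
  refine ⟨φ, ?_, ?_, ?_, ?_⟩
  · intro v
    rw [hφ]
    exact MeasurableSet.biUnion (ψ v).countable_toSet fun i _ => measurableSet_Ico
  · intro v
    rw [hφ]
    apply Set.iUnion₂_subset
    intro i hi
    have hmem := hsub v hi
    rw [Finset.mem_Icc] at hmem
    rw [hB]
    intro x hx
    obtain ⟨hx1, hx2⟩ := hx
    constructor
    · have : (0:ℝ) ≤ ((i:ℝ) - 1)/N := by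
        apply div_nonneg _ hNR.le
        have : (1:ℝ) ≤ (i:ℝ) := by exact_mod_cast hmem.1
        linarith
      linarith
    · have : (i:ℝ)/N ≤ 1 := by
        rw [div_le_one hNR]
        exact_mod_cast hmem.2
      linarith
  · intro v
    have hvol : volume (φ v) = ∑ i ∈ ψ v, volume (B i) := by
      rw [hφ]
      exact measure_biUnion_finset
        (fun i hi i' hi' hii => hBdisjoint i i' hii)
        (fun i _ => measurableSet_Ico)
    have hvol2 : volume (φ v) = (ψ v).card • ENNReal.ofReal (1/N) := by
      rw [hvol]
      rw [Finset.sum_congr rfl (fun i hi => hBvol i (Finset.mem_Icc.1 (hsub v hi)).1)]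
      rw [Finset.sum_const]
    rw [hvol2]
    rw [nsmul_eq_mul, ENNReal.toReal_mul, ENNReal.toReal_ofReal (by positivity)]
    have hnatcast : (((ψ v).card : ENNReal)).toReal = (((ψ v).card : ℕ) : ℝ) := by simp
    rw [hnatcast]
    have hQ : (f v : ℝ) * N ≤ ((ψ v).card : ℝ) := by
      have := hcard v
      have h2 : ((N:ℚ) * f v : ℚ) ≤ ((ψ v).card : ℚ) := this
      have h3 : (((N:ℚ) * f v : ℚ) : ℝ) ≤ (((ψ v).card : ℚ) : ℝ) := by exact_mod_cast h2
      push_cast at h3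
      linarith
    rw [mul_one_div, le_div_iff₀ hNR]
    exact hQ
  · intro a c hadj
    rw [hφ]
    apply Set.eq_empty_of_subset_empty
    rintro x ⟨hxa, hxc⟩
    simp only [Set.mem_iUnion] at hxa hxc
    obtain ⟨i, hi, hxi⟩ := hxa
    obtain ⟨i', hi', hxi'⟩ := hxc
    by_cases hii : i = i'
    · subst hii
      exact absurd hi' (Finset.disjoint_left.1 (hdisj a c hadj) hi)
    · exact Set.disjoint_left.1 (hBdisjoint i i' hii) hxi hxi'

/-- For a finite graph `G` and a demand function `f`, the following are equivalent:
(a) `G` has an `f`-coloring; (b) there is a common denominator `N` for `f` such that `G`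
has an `(f, N)`-coloring; (c) for every weight function `w` there is an independent set
`X` with `w(X) ≥ w_f = Σ_v f(v)·w(v)`; (d) the same for every nonnegative weight
function. -/
theorem fColoring_equivalent_characterizations {V : Type} [Fintype V]
    (G : SimpleGraph V) (f : V → ℚ) (hf : ∀ v, 0 ≤ f v ∧ f v ≤ 1) :
    (HasFColoring G f ↔
      ∃ N : ℕ, IsCommonDenom f N ∧ HasFNColoring G f N) ∧
    (HasFColoring G f ↔
      ∀ w : V → ℝ, ∃ X : Finset V, (∀ u ∈ X, ∀ v ∈ X, ¬ G.Adj u v) ∧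
        (∑ v, (f v : ℝ) * w v) ≤ ∑ v ∈ X, w v) ∧
    (HasFColoring G f ↔
      ∀ w : V → ℝ, (∀ v, 0 ≤ w v) → ∃ X : Finset V, (∀ u ∈ X, ∀ v ∈ X, ¬ G.Adj u v) ∧
        (∑ v, (f v : ℝ) * w v) ≤ ∑ v ∈ X, w v) := by
  classical
  have hf0 : ∀ v, 0 ≤ f v := fun v => (hf v).1
  have ha2c : HasFColoring G f → ∀ w : V → ℝ, ∃ X : Finset V,
      (∀ u ∈ X, ∀ v ∈ X, ¬ G.Adj u v) ∧ (∑ v, (f v : ℝ) * w v) ≤ ∑ v ∈ X, w v :=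
    fun h w => fcoloring_to_weights G f hf0 h w
  have hd2b : (∀ w : V → ℝ, (∀ v, 0 ≤ w v) → ∃ X : Finset V,
      (∀ u ∈ X, ∀ v ∈ X, ¬ G.Adj u v) ∧ (∑ v, (f v : ℝ) * w v) ≤ ∑ v ∈ X, w v) →
      ∃ N : ℕ, IsCommonDenom f N ∧ HasFNColoring G f N := by
    intro hd
    obtain ⟨lam, h0, hind, htot, hcov⟩ := exists_rational_cover G f hd
    exact cover_to_coloring G f hf0 lam h0 hind htot hcov
  have hb2a : (∃ N : ℕ, IsCommonDenom f N ∧ HasFNColoring G f N) → HasFColoring G f := by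
    rintro ⟨N, hcd, hcol⟩
    exact fn_to_fcoloring G f N hcd.1 hcol
  refine ⟨⟨fun ha => hd2b (fun w _ => ha2c ha w), hb2a⟩,
    ⟨fun ha => ha2c ha, fun hc => hb2a (hd2b (fun w _ => hc w))⟩,
    ⟨fun ha => fun w _ => ha2c ha w, fun hd => hb2a (hd2b hd)⟩⟩
end

section
/- If a finite subcubic triangle-free graph G with a nail B is a minimal counterexample, then every vertex of G has degree at least two. -/
open SimpleGraph

/-- The degree of a vertex, as the number of neighbors. -/
noncomputable def degSet {V : Type} (G : SimpleGraph V) (v : V) : ℕ :=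
  (G.neighborSet v).ncard

/-- A graph is subcubic if every vertex has degree at most 3. -/
def Subcubic {V : Type} (G : SimpleGraph V) : Prop := ∀ v, degSet G v ≤ 3

/-- A graph is triangle-free if it contains no 3-clique (equivalently no 3-cycle). -/
def TriangleFree {V : Type} (G : SimpleGraph V) : Prop := G.CliqueFree 3

/-- The graph `K'₄` obtained from `K₄` on vertices `0,1,2,3` by subdividing the
perfect-matching edges `01` and `23` twice each, using new vertices `4,5` and `6,7`. -/
def K4' : SimpleGraph (Fin 8) :=
  SimpleGraph.fromRel (fun a b =>
    (a, b) ∈ [((0 : Fin 8), (2 : Fin 8)), (0, 3), (1, 2), (1, 3),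
              (0, 4), (4, 5), (5, 1), (2, 6), (6, 7), (7, 3)])

/-- A graph is dangerous if it is a 5-cycle or `K'₄`. -/
def IsDangerous {W : Type} (H : SimpleGraph W) : Prop :=
  Nonempty (H ≃g SimpleGraph.cycleGraph 5) ∨ Nonempty (H ≃g K4')

/-- `B` is a nail for `G`: every vertex of `B` has degree at most two in `G`, and every
dangerous induced subgraph of `G` has at least two `B`-safe special vertices (vertices of
degree two in the subgraph that are in `B` or have degree three in `G`). -/
def IsNail {V : Type} (G : SimpleGraph V) (B : Set V) : Prop :=
  (∀ v ∈ B, degSet G v ≤ 2) ∧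
  ∀ S : Set V, IsDangerous (G.induce S) →
    ∃ u v : S, u ≠ v ∧
      degSet (G.induce S) u = 2 ∧ degSet (G.induce S) v = 2 ∧
      ((u : V) ∈ B ∨ degSet G (u : V) = 3) ∧ ((v : V) ∈ B ∨ degSet G (v : V) = 3)

/-- The demand function `f_B`. -/
noncomputable def fB {V : Type} (G : SimpleGraph V) (B : Set V) (v : V) : ℚ :=
  haveI := Classical.dec (v ∈ B)
  if v ∈ B then ((7 : ℚ) - degSet G v) / 14 else ((8 : ℚ) - degSet G v) / 14

/-- `G` with nail `B` is a minimal counterexample: it is subcubic, triangle-free, has no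
`f_B`-coloring, and every subcubic triangle-free graph `G'` with a nail `B'` which has
fewer vertices, or the same number of vertices and a smaller nail, has an `f_{B'}`-coloring. -/
def MinCex {V : Type} [Fintype V] (G : SimpleGraph V) (B : Set V) : Prop :=
  Subcubic G ∧ TriangleFree G ∧ IsNail G B ∧ ¬ HasFColoring G (fB G B) ∧
  ∀ (n : ℕ) (G' : SimpleGraph (Fin n)) (B' : Set (Fin n)),
    Subcubic G' → TriangleFree G' → IsNail G' B' →
    (n < Fintype.card V ∨ (n = Fintype.card V ∧ B'.ncard < B.ncard)) →
    HasFColoring G' (fB G' B')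

/-- `G` is a minimal counterexample with the empty nail: the empty set is a nail for `G`,
`G` is subcubic, triangle-free and has no `f_∅`-coloring, while every smaller subcubic
triangle-free graph with a nail `B'` has an `f_{B'}`-coloring. -/
def MinCexEmpty {V : Type} [Fintype V] (G : SimpleGraph V) : Prop :=
  Subcubic G ∧ TriangleFree G ∧ IsNail G ∅ ∧ ¬ HasFColoring G (fB G ∅) ∧
  ∀ (n : ℕ) (G' : SimpleGraph (Fin n)) (B' : Set (Fin n)),
    Subcubic G' → TriangleFree G' → IsNail G' B' →
    n < Fintype.card V →
    HasFColoring G' (fB G' B')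


open MeasureTheory in
lemma exists_subset_volume_eq (A : Set ℝ) (hA : MeasurableSet A) (hA1 : A ⊆ Set.Icc 0 1)
    (r : ℝ) (hr0 : 0 ≤ r) (hr : ENNReal.ofReal r ≤ volume A) :
    ∃ C : Set ℝ, C ⊆ A ∧ MeasurableSet C ∧ volume C = ENNReal.ofReal r := by
  set F : ℝ → ℝ := fun t => (volume (A ∩ Set.Iic t)).toReal with hF
  have hfin : ∀ t, volume (A ∩ Set.Iic t) ≠ ⊤ := by
    intro t
    have : volume (A ∩ Set.Iic t) ≤ volume (Set.Icc (0:ℝ) 1) :=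
      measure_mono ((Set.inter_subset_left).trans hA1)
    simp only [Real.volume_Icc] at this
    exact ne_top_of_le_ne_top (by simp) this
  have hAfin : volume A ≠ ⊤ := by
    have : volume A ≤ volume (Set.Icc (0:ℝ) 1) := measure_mono hA1
    simp only [Real.volume_Icc] at this
    exact ne_top_of_le_ne_top (by simp) this
  have hmono : ∀ s t : ℝ, s ≤ t → F s ≤ F t := by
    intro s t hst
    exact ENNReal.toReal_mono (hfin t)
      (measure_mono (Set.inter_subset_inter_right _ (Set.Iic_subset_Iic.2 hst)))
  have key : ∀ s t : ℝ, s ≤ t → F t - F s ≤ t - s := by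
    intro s t hst
    have h1 : A ∩ Set.Iic t ⊆ (A ∩ Set.Iic s) ∪ Set.Ioc s t := by
      intro x ⟨hxA, hxt⟩
      by_cases hxs : x ≤ s
      · exact Or.inl ⟨hxA, hxs⟩
      · exact Or.inr ⟨lt_of_not_ge hxs, hxt⟩
    have h2 : volume (A ∩ Set.Iic t) ≤ volume (A ∩ Set.Iic s) + ENNReal.ofReal (t - s) := by
      calc volume (A ∩ Set.Iic t) ≤ volume ((A ∩ Set.Iic s) ∪ Set.Ioc s t) := measure_mono h1
        _ ≤ volume (A ∩ Set.Iic s) + volume (Set.Ioc s t) := measure_union_le _ _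
        _ = volume (A ∩ Set.Iic s) + ENNReal.ofReal (t - s) := by rw [Real.volume_Ioc]
    have h3 : F t ≤ F s + (t - s) := by
      have := ENNReal.toReal_mono
        (ENNReal.add_ne_top.2 ⟨hfin s, ENNReal.ofReal_ne_top⟩) h2
      rwa [ENNReal.toReal_add (hfin s) ENNReal.ofReal_ne_top,
        ENNReal.toReal_ofReal (by linarith)] at this
    linarith
  have hlip : LipschitzWith 1 F := by
    apply LipschitzWith.of_dist_le_mul
    intro s t
    rw [Real.dist_eq, Real.dist_eq, NNReal.coe_one, one_mul]
    rcases le_total s t with h | h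
    · rw [abs_of_nonpos (by linarith [hmono s t h]), abs_of_nonpos (by linarith)]
      have := key s t h; linarith
    · rw [abs_of_nonneg (by linarith [hmono t s h]), abs_of_nonneg (by linarith)]
      have := key t s h; linarith
  have hF0 : F 0 = 0 := by
    have hsub : A ∩ Set.Iic 0 ⊆ {0} := by
      intro x ⟨hxA, hx⟩
      have := hA1 hxA
      simp only [Set.mem_Icc] at this
      simp [le_antisymm hx this.1]
    have h0 : volume (A ∩ Set.Iic 0) = 0 :=
      le_antisymm (le_trans (measure_mono hsub) (by simp)) zero_le
    simp [hF, h0]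
  have hF1 : r ≤ F 1 := by
    have hAe : A ∩ Set.Iic 1 = A := by
      apply Set.inter_eq_left.2
      intro x hx; exact (hA1 hx).2
    rw [hF]; simp only [hAe]
    rw [← ENNReal.toReal_ofReal hr0]
    exact ENNReal.toReal_mono hAfin hr
  have hiv := intermediate_value_Icc (by norm_num : (0:ℝ) ≤ 1)
    (hlip.continuous.continuousOn (s := Set.Icc 0 1))
  have hrmem : r ∈ Set.Icc (F 0) (F 1) := ⟨by rw [hF0]; exact hr0, hF1⟩
  obtain ⟨t, _, ht⟩ := hiv hrmem
  refine ⟨A ∩ Set.Iic t, Set.inter_subset_left, hA.inter measurableSet_Iic, ?_⟩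
  rw [← ht, hF]
  exact (ENNReal.ofReal_toReal (hfin t)).symm

lemma degSet_iso {W W' : Type} {H : SimpleGraph W} {K : SimpleGraph W'}
    (φ : H ≃g K) (a : W) : degSet K (φ a) = degSet H a := by
  unfold degSet
  rw [← Nat.card_coe_set_eq, ← Nat.card_coe_set_eq]
  exact (Nat.card_congr (φ.mapNeighborSet a)).symm

/-- induced subgraph of a comap along an injective map is isomorphic to induced on image -/
noncomputable def comapInduceIso {V W : Type} (G : SimpleGraph V) (g : W → V)
    (hg : Function.Injective g) (S : Set W) :
    ((G.comap g).induce S) ≃g (G.induce (g '' S)) where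
  toEquiv := Equiv.Set.imageOfInjOn g S (hg.injOn)
  map_rel_iff' := by
    intro a b
    simp [Equiv.Set.imageOfInjOn, SimpleGraph.comap_adj]

/-- Lemma 3.4: in a minimal counterexample, every vertex has degree at least two. -/
theorem minCex_min_degree_two {V : Type} [Fintype V] (G : SimpleGraph V)
    (B : Set V) (hG : MinCex G B) :
    ∀ v : V, 2 ≤ degSet G v := by
  classical
  intro v
  by_contra hdeg
  push_neg at hdeg
  obtain ⟨hsub, htf, hnail, hnocol, hmin⟩ := hG
  set n : ℕ := Fintype.card V - 1 with hn
  have hcardpos : 0 < Fintype.card V := Fintype.card_pos_iff.2 ⟨v⟩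
  have hlt : n < Fintype.card V := by omega
  have hcard : Fintype.card ({v}ᶜ : Set V) = n := by
    rw [Fintype.card_compl_set]
    simp [hn]
  obtain ⟨e⟩ := Fintype.card_eq.mp (by rw [hcard, Fintype.card_fin] :
    Fintype.card ({v}ᶜ : Set V) = Fintype.card (Fin n))
  set g : Fin n → V := fun i => ((e.symm i : ({v}ᶜ : Set V)) : V) with hgdef
  have hg : Function.Injective g := by
    intro a b hab
    exact e.symm.injective (Subtype.ext hab)
  have hrange : Set.range g = {v}ᶜ := by
    ext w
    constructor
    · rintro ⟨i, rfl⟩; exact (e.symm i).2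
    · intro hw; exact ⟨e ⟨w, hw⟩, by simp [hgdef]⟩
  have hgne : ∀ i, g i ≠ v := by
    intro i
    have : g i ∈ ({v}ᶜ : Set V) := hrange ▸ Set.mem_range_self i
    simpa using this
  set G' : SimpleGraph (Fin n) := G.comap g with hG'def
  have hnbr' : ∀ x : Fin n, G'.neighborSet x = g ⁻¹' (G.neighborSet (g x)) := by
    intro x; rfl
  have hdegG' : ∀ x : Fin n, degSet G' x = (G.neighborSet (g x) \ {v}).ncard := by
    intro x
    unfold degSet
    rw [hnbr' x, ← Set.ncard_image_of_injective _ hg, Set.image_preimage_eq_inter_range,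
      hrange]
    rfl
  have hNfin : ∀ w : V, (G.neighborSet w).Finite := fun w => Set.toFinite _
  have hdeg_le : ∀ x : Fin n, degSet G' x ≤ degSet G (g x) := by
    intro x
    rw [hdegG']
    exact Set.ncard_le_ncard Set.diff_subset (hNfin _)
  have hdeg_eq : ∀ x : Fin n, ¬ G.Adj v (g x) → degSet G' x = degSet G (g x) := by
    intro x hx
    rw [hdegG']
    congr 1
    rw [Set.diff_singleton_eq_self]
    intro hv
    exact hx (G.adj_symm hv)
  have hdeg_adj : ∀ x : Fin n, G.Adj v (g x) → degSet G' x + 1 = degSet G (g x) := by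
    intro x hx
    rw [hdegG']
    have hvmem : v ∈ G.neighborSet (g x) := G.adj_symm hx
    rw [Set.ncard_diff_singleton_of_mem hvmem]
    have : 1 ≤ (G.neighborSet (g x)).ncard := by
      rw [Nat.one_le_iff_ne_zero, ← Nat.pos_iff_ne_zero]
      exact (Set.ncard_pos (hNfin _)).2 ⟨v, hvmem⟩
    unfold degSet
    omega
  set B' : Set (Fin n) := g ⁻¹' (B ∪ G.neighborSet v) with hB'def
  -- Subcubic
  have hsub' : Subcubic G' := fun x => le_trans (hdeg_le x) (hsub (g x))
  -- Triangle-free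
  have htf' : TriangleFree G' := by
    have emb : G' ↪g G := ⟨⟨g, hg⟩, fun {a b} => Iff.rfl⟩
    exact htf.comap emb.isContained
  -- Nail
  have hnail' : IsNail G' B' := by
    constructor
    · intro x hx
      rcases hx with hxB | hxN
      · exact le_trans (hdeg_le x) (hnail.1 _ hxB)
      · have := hdeg_adj x hxN
        have h3 := hsub (g x)
        omega
    · intro S' hS'
      let ι : ((G'.induce S') ≃g (G.induce (g '' S'))) := comapInduceIso G g hg S'
      have hdang : IsDangerous (G.induce (g '' S')) := by
        rcases hS' with h | h
        · obtain ⟨α⟩ := h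
          exact Or.inl ⟨ι.symm.trans α⟩
        · obtain ⟨α⟩ := h
          exact Or.inr ⟨ι.symm.trans α⟩
      obtain ⟨u₁, u₂, hne, hd1, hd2, hs1, hs2⟩ := hnail.2 (g '' S') hdang
      have hcoe : ∀ u : ↥(g '' S'), g ↑(ι.symm u) = ↑u := by
        intro u
        exact congrArg Subtype.val (RelIso.apply_symm_apply ι u)
      have hsafe : ∀ u : ↥(g '' S'), ((u : V) ∈ B ∨ degSet G (u : V) = 3) →
          ((↑(ι.symm u) : Fin n) ∈ B' ∨ degSet G' (↑(ι.symm u) : Fin n) = 3) := by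
        intro u hu
        rcases hu with huB | hu3
        · left
          show g ↑(ι.symm u) ∈ B ∪ G.neighborSet v
          rw [hcoe]; exact Or.inl huB
        · by_cases hadj : G.Adj v (g ↑(ι.symm u))
          · left
            show g ↑(ι.symm u) ∈ B ∪ G.neighborSet v
            exact Or.inr hadj
          · right
            rw [hdeg_eq _ hadj, hcoe]; exact hu3
      refine ⟨ι.symm u₁, ι.symm u₂, fun h => hne (ι.symm.injective h), ?_, ?_, ?_, ?_⟩
      · have h := degSet_iso ι (ι.symm u₁)
        rw [RelIso.apply_symm_apply] at h
        rw [← h]; exact hd1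
      · have h := degSet_iso ι (ι.symm u₂)
        rw [RelIso.apply_symm_apply] at h
        rw [← h]; exact hd2
      · exact hsafe u₁ hs1
      · exact hsafe u₂ hs2
  obtain ⟨φ', hmeas', hsubI', hge', hdisj'⟩ := hmin n G' B' hsub' htf' hnail' (Or.inl hlt)
  have fdem : ∀ x : Fin n, fB G B (g x) ≤ fB G' B' x := by
    intro x
    by_cases hBx : g x ∈ B
    · have hx' : x ∈ B' := Or.inl hBx
      rw [show fB G B (g x) = (7 - (degSet G (g x) : ℚ))/14 from by simp [fB, hBx],
        show fB G' B' x = (7 - (degSet G' x : ℚ))/14 from by simp [fB, hx']]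
      have h := hdeg_le x
      have hc : (degSet G' x : ℚ) ≤ (degSet G (g x) : ℚ) := by exact_mod_cast h
      linarith
    · by_cases hNx : G.Adj v (g x)
      · have hx' : x ∈ B' := Or.inr hNx
        rw [show fB G B (g x) = (8 - (degSet G (g x) : ℚ))/14 from by simp [fB, hBx],
          show fB G' B' x = (7 - (degSet G' x : ℚ))/14 from by simp [fB, hx']]
        have h := hdeg_adj x hNx
        have hc : (degSet G' x : ℚ) + 1 = (degSet G (g x) : ℚ) := by exact_mod_cast h
        linarith
      · have hx' : x ∉ B' := by
          intro hmem
          rcases hmem with h | h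
          · exact hBx h
          · exact hNx h
        rw [show fB G B (g x) = (8 - (degSet G (g x) : ℚ))/14 from by simp [fB, hBx],
          show fB G' B' x = (8 - (degSet G' x : ℚ))/14 from by simp [fB, hx'],
          hdeg_eq x hNx]
  have hmemc : ∀ {w : V}, w ≠ v → w ∈ ({v}ᶜ : Set V) := by
    intro w hw; simpa using hw
  have hgx : ∀ (w : V) (hw : w ≠ v), g (e ⟨w, hmemc hw⟩) = w := by
    intro w hw
    show ((e.symm (e ⟨w, hmemc hw⟩) : ({v}ᶜ : Set V)) : V) = w
    rw [Equiv.symm_apply_apply]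
  have hvolIcc : MeasureTheory.volume (Set.Icc (0:ℝ) 1) = 1 := by
    rw [Real.volume_Icc]; norm_num
  have hfinφ' : ∀ x : Fin n, MeasureTheory.volume (φ' x) ≠ ⊤ := by
    intro x
    refine ne_top_of_le_ne_top ?_ (MeasureTheory.measure_mono (hsubI' x))
    rw [hvolIcc]; exact ENNReal.one_ne_top
  have hdv01 : degSet G v = 0 ∨ degSet G v = 1 := by omega
  rcases hdv01 with hdv | hdv
  · -- v is isolated
    have hN0 : G.neighborSet v = ∅ := (Set.ncard_eq_zero (hNfin v)).1 hdv
    have hnoadj : ∀ w, ¬ G.Adj v w := by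
      intro w h
      have : w ∈ G.neighborSet v := h
      rw [hN0] at this
      exact this
    apply hnocol
    refine ⟨fun w => if h : w = v then Set.Icc 0 1 else φ' (e ⟨w, hmemc h⟩), ?_, ?_, ?_, ?_⟩
    · intro w
      by_cases h : w = v
      · simp only [h, dif_pos]; exact measurableSet_Icc
      · simp only [dif_neg h]; exact hmeas' _
    · intro w
      by_cases h : w = v
      · simp only [h, dif_pos]; exact subset_rfl
      · simp only [dif_neg h]; exact hsubI' _
    · intro w
      by_cases h : w = v
      · subst h
        simp only [dif_pos]
        rw [hvolIcc]
        have hfv : fB G B w ≤ 1 := by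
          by_cases hvB : w ∈ B
          · rw [show fB G B w = (7 - (degSet G w : ℚ))/14 from by simp [fB, hvB], hdv]
            norm_num
          · rw [show fB G B w = (8 - (degSet G w : ℚ))/14 from by simp [fB, hvB], hdv]
            norm_num
        have : (fB G B w : ℝ) ≤ 1 := by exact_mod_cast hfv
        simpa using this
      · simp only [dif_neg h]
        refine le_trans ?_ (hge' (e ⟨w, hmemc h⟩))
        have := fdem (e ⟨w, hmemc h⟩)
        rw [hgx w h] at this
        exact_mod_cast this
    · intro a b hab
      have ha : a ≠ v := by rintro rfl; exact hnoadj b hab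
      have hb : b ≠ v := by rintro rfl; exact hnoadj a (G.adj_symm hab)
      simp only [dif_neg ha, dif_neg hb]
      apply hdisj'
      show G.Adj (g (e ⟨a, hmemc ha⟩)) (g (e ⟨b, hmemc hb⟩))
      rw [hgx a ha, hgx b hb]
      exact hab
  · -- v has exactly one neighbor u₀
    obtain ⟨u₀, hNu⟩ := Set.ncard_eq_one.1 hdv
    have hadjvu : G.Adj v u₀ := by
      have : u₀ ∈ G.neighborSet v := by rw [hNu]; rfl
      exact this
    have huv : u₀ ≠ v := fun h => G.irrefl (h ▸ hadjvu)
    have hadj_only : ∀ w, G.Adj v w → w = u₀ := by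
      intro w h
      have : w ∈ G.neighborSet v := h
      rwa [hNu, Set.mem_singleton_iff] at this
    set xu : Fin n := e ⟨u₀, hmemc huv⟩ with hxu
    have hgxu : g xu = u₀ := hgx u₀ huv
    have hxuB' : xu ∈ B' := by
      refine Or.inr ?_
      show G.Adj v (g xu)
      rw [hgxu]; exact hadjvu
    set r : ℚ := fB G' B' xu with hrdef
    have hr_eq : r = (7 - (degSet G' xu : ℚ))/14 := by simp [hrdef, fB, hxuB']
    have hd'le : degSet G' xu ≤ 3 := hsub' xu
    have hr0 : (0:ℚ) ≤ r := by
      rw [hr_eq]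
      have : (degSet G' xu : ℚ) ≤ 3 := by exact_mod_cast hd'le
      linarith
    have hr12 : r ≤ 1/2 := by
      rw [hr_eq]
      have : (0:ℚ) ≤ (degSet G' xu : ℚ) := by positivity
      linarith
    have hofr : ENNReal.ofReal (r : ℝ) ≤ MeasureTheory.volume (φ' xu) := by
      refine ENNReal.ofReal_le_of_le_toReal ?_
      exact hge' xu
    obtain ⟨A, hAsub, hAmeas, hAvol⟩ := exists_subset_volume_eq (φ' xu) (hmeas' xu)
      (hsubI' xu) (r : ℝ) (by exact_mod_cast hr0) hofr
    have hAIcc : A ⊆ Set.Icc 0 1 := hAsub.trans (hsubI' xu)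
    apply hnocol
    refine ⟨fun w => if h : w = v then Set.Icc 0 1 \ A else
      if w = u₀ then A else φ' (e ⟨w, hmemc h⟩), ?_, ?_, ?_, ?_⟩
    · intro w
      by_cases h : w = v
      · simp only [h, dif_pos]
        exact measurableSet_Icc.diff hAmeas
      · simp only [dif_neg h]
        by_cases h2 : w = u₀
        · simp only [if_pos h2]; exact hAmeas
        · simp only [if_neg h2]; exact hmeas' _
    · intro w
      by_cases h : w = v
      · simp only [h, dif_pos]; exact Set.diff_subset
      · simp only [dif_neg h]
        by_cases h2 : w = u₀
        · simp only [if_pos h2]; exact hAIcc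
        · simp only [if_neg h2]; exact hsubI' _
    · intro w
      by_cases h : w = v
      · subst h
        simp only [dif_pos]
        have hvola : MeasureTheory.volume A ≤ 1 := by
          refine le_trans (MeasureTheory.measure_mono hAIcc) ?_
          rw [hvolIcc]
        have hvd : MeasureTheory.volume (Set.Icc (0:ℝ) 1 \ A) =
            ENNReal.ofReal (1 - (r : ℝ)) := by
          rw [MeasureTheory.measure_diff hAIcc hAmeas.nullMeasurableSet
            (by rw [hAvol]; exact ENNReal.ofReal_ne_top), hvolIcc, hAvol,
            ENNReal.ofReal_sub _ (by exact_mod_cast hr0)]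
          norm_num
        have hr12R : (r : ℝ) ≤ 1/2 := by
          have h' := Rat.cast_le (K := ℝ) |>.mpr hr12
          norm_num at h'
          exact h'
        rw [hvd, ENNReal.toReal_ofReal (by linarith)]
        have hfv : fB G B w ≤ 1/2 := by
          by_cases hvB : w ∈ B
          · rw [show fB G B w = (7 - (degSet G w : ℚ))/14 from by simp [fB, hvB], hdv]
            norm_num
          · rw [show fB G B w = (8 - (degSet G w : ℚ))/14 from by simp [fB, hvB], hdv]
            norm_num
        have h1 : (fB G B w : ℝ) ≤ 1/2 := by
          have h' := Rat.cast_le (K := ℝ) |>.mpr hfv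
          norm_num at h'
          exact h'
        linarith
      · simp only [dif_neg h]
        by_cases h2 : w = u₀
        · simp only [if_pos h2]
          rw [hAvol, ENNReal.toReal_ofReal (by exact_mod_cast hr0)]
          have := fdem xu
          rw [hgxu] at this
          subst h2
          exact_mod_cast this
        · simp only [if_neg h2]
          refine le_trans ?_ (hge' (e ⟨w, hmemc h⟩))
          have := fdem (e ⟨w, hmemc h⟩)
          rw [hgx w h] at this
          exact_mod_cast this
    · intro a b hab
      have hsubφ : ∀ (w : V) (hw : w ≠ v),
          (if h : w = v then Set.Icc 0 1 \ A else
            if w = u₀ then A else φ' (e ⟨w, hmemc h⟩)) ⊆ φ' (e ⟨w, hmemc hw⟩) := by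
        intro w hw
        simp only [dif_neg hw]
        by_cases h2 : w = u₀
        · simp only [if_pos h2]
          subst h2
          exact hAsub
        · simp only [if_neg h2]
          exact subset_rfl
      by_cases ha : a = v
      · have hb2 : b = u₀ := hadj_only b (ha ▸ hab)
        have hbv : b ≠ v := by rw [hb2]; exact huv
        simp only [dif_pos ha, dif_neg hbv, if_pos hb2]
        exact Set.diff_inter_self
      · by_cases hb : b = v
        · have ha2 : a = u₀ := hadj_only a (hb ▸ G.adj_symm hab)
          have hav : a ≠ v := by rw [ha2]; exact huv
          simp only [dif_pos hb, dif_neg hav, if_pos ha2]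
          rw [Set.inter_comm]
          exact Set.diff_inter_self
        · have hG'ab : G'.Adj (e ⟨a, hmemc ha⟩) (e ⟨b, hmemc hb⟩) := by
            show G.Adj (g (e ⟨a, hmemc ha⟩)) (g (e ⟨b, hmemc hb⟩))
            rw [hgx a ha, hgx b hb]
            exact hab
          have hd := hdisj' _ _ hG'ab
          refine Set.eq_empty_of_subset_empty ?_
          rw [← hd]
          exact Set.inter_subset_inter (hsubφ a ha) (hsubφ b hb)
end
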